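/- arXiv:1602.08922 — 3 statements merged into one kernel-verified Lean document; each statement's English description precedes it below -/
import Mathlib

section
/- Let p be an odd prime, α ≥ 2 an integer, b an integer, and m an integer divisible by p. Then the exponential sum c_b(m, p^α) := Σ_{y mod p^α, y² ≡ b m² (mod p^α)} e(y/p^α) is zero, where e(x) = exp(2πix). -/
open Complex Finset

/-- `c_b(m, d) = Σ_{y mod d, y² ≡ b m² (mod d)} e(y/d)`. -/
noncomputable def cSum (b m : ℤ) (d : ℕ) : ℂ :=
  ∑ y ∈ Finset.range d,
    if (d : ℤ) ∣ ((y : ℤ) ^ 2 - b * m ^ 2) then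
      Complex.exp (2 * Real.pi * Complex.I * (y : ℂ) / (d : ℂ)) else 0

lemma sum_range_mul_eq' {M : Type*} [AddCommMonoid M] (f : ℕ → M) (a b : ℕ) :
    ∑ y ∈ Finset.range (a * b), f y =
      ∑ j ∈ Finset.range a, ∑ r ∈ Finset.range b, f (b * j + r) := by
  induction a with
  | zero => simp
  | succ a ih =>
      rw [Nat.succ_mul, Finset.sum_range_add, ih, Finset.sum_range_succ]
      simp [mul_comm a b]

lemma geom_zero' (p : ℕ) (hp : 1 < p) :
    ∑ j ∈ Finset.range p, Complex.exp (2 * Real.pi * Complex.I * (j : ℂ) / (p : ℂ)) = 0 := by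
  have hp0 : (p : ℂ) ≠ 0 := Nat.cast_ne_zero.mpr (by omega)
  have h2pi : (2 * (Real.pi : ℂ) * Complex.I) ≠ 0 := by simp [Real.pi_ne_zero]
  have key : ∀ j : ℕ, Complex.exp (2 * Real.pi * Complex.I * (j : ℂ) / (p : ℂ)) =
      Complex.exp (2 * Real.pi * Complex.I / (p : ℂ)) ^ j := by
    intro j
    rw [← Complex.exp_nat_mul]
    ring_nf
  simp_rw [key]
  have hne : Complex.exp (2 * Real.pi * Complex.I / (p : ℂ)) ≠ 1 := by
    intro h
    rw [Complex.exp_eq_one_iff] at h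
    obtain ⟨n, hn⟩ := h
    field_simp at hn
    have h1 : (n : ℂ) * (p : ℂ) = 1 := by
      apply mul_right_cancel₀ h2pi
      rw [one_mul]; linear_combination (-(2 * (Real.pi : ℂ) * Complex.I)) * hn
    have h2 : ((n * (p:ℤ) : ℤ) : ℂ) = ((1 : ℤ) : ℂ) := by push_cast; exact h1
    have h3 : n * (p:ℤ) = 1 := by exact_mod_cast h2
    have h4 : (p:ℤ) ∣ 1 := ⟨n, by rw [← h3]; ring⟩
    have h5 := Int.le_of_dvd one_pos h4
    have h6 : (1:ℤ) < (p:ℤ) := by exact_mod_cast hp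
    omega
  rw [geom_sum_eq hne, ← Complex.exp_nat_mul]
  have : (p : ℂ) * (2 * ↑Real.pi * Complex.I / ↑p) = 2 * ↑Real.pi * Complex.I := by
    field_simp
  rw [this, Complex.exp_two_pi_mul_I, sub_self, zero_div]

lemma diff_dvd (p : ℕ) (β : ℕ) (hβ : 1 ≤ β) (r' j : ℤ) :
    ((p:ℤ)^(β+1)) ∣ ((p:ℤ)^β * j + (p:ℤ)*r')^2 - ((p:ℤ)*r')^2 := by
  have e : ((p:ℤ)^β * j + (p:ℤ)*r')^2 - ((p:ℤ)*r')^2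
      = j^2 * ((p:ℤ)^β)^2 + (2*j*r') * ((p:ℤ)^β * (p:ℤ)) := by ring
  rw [e]
  apply dvd_add
  · exact Dvd.dvd.mul_left (by rw [← pow_mul]; exact pow_dvd_pow _ (by omega)) _
  · exact Dvd.dvd.mul_left (dvd_of_eq (pow_succ _ _)) _

lemma cond_iff (p : ℕ) (hp : p.Prime) (β : ℕ) (hβ : 1 ≤ β) (b m : ℤ) (hm : (p:ℤ) ∣ m)
    (r j : ℤ) :
    ((p:ℤ)^(β+1)) ∣ ((p:ℤ)^β * j + r)^2 - b*m^2 ↔ ((p:ℤ)^(β+1)) ∣ r^2 - b*m^2 := by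
  have hP : Prime (p:ℤ) := Nat.prime_iff_prime_int.mp hp
  have hbm : (p:ℤ)^2 ∣ b*m^2 := Dvd.dvd.mul_left (pow_dvd_pow_of_dvd hm 2) b
  have h2d : (p:ℤ)^2 ∣ (p:ℤ)^(β+1) := pow_dvd_pow _ (by omega)
  have hpq : (p:ℤ) ∣ (p:ℤ)^β * j := Dvd.dvd.mul_right (dvd_pow_self _ (by omega)) j
  have sq_dvd : ∀ y : ℤ, ((p:ℤ)^(β+1)) ∣ y^2 - b*m^2 → (p:ℤ) ∣ y := by
    intro y hy
    have h1 : (p:ℤ)^2 ∣ y^2 - b*m^2 := h2d.trans hy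
    have h2 : (p:ℤ)^2 ∣ y^2 := by
      have := dvd_add h1 hbm; simpa using this
    exact hP.dvd_of_dvd_pow ((dvd_pow_self (p:ℤ) two_ne_zero).trans h2)
  constructor
  · intro h
    have hy : (p:ℤ) ∣ ((p:ℤ)^β * j + r) := sq_dvd _ h
    have hr : (p:ℤ) ∣ r := by
      have := dvd_sub hy hpq; simpa using this
    obtain ⟨r', rfl⟩ := hr
    have h2 := dvd_sub h (diff_dvd p β hβ r' j)
    have e : (((p:ℤ)^β*j + (p:ℤ)*r')^2 - b*m^2) - (((p:ℤ)^β*j + (p:ℤ)*r')^2 - ((p:ℤ)*r')^2)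
        = ((p:ℤ)*r')^2 - b*m^2 := by ring
    rwa [e] at h2
  · intro h
    have hr : (p:ℤ) ∣ r := sq_dvd _ h
    obtain ⟨r', rfl⟩ := hr
    have h2 := dvd_add h (diff_dvd p β hβ r' j)
    have e : (((p:ℤ)*r')^2 - b*m^2) + ((((p:ℤ)^β*j + (p:ℤ)*r')^2 - ((p:ℤ)*r')^2))
        = ((p:ℤ)^β*j + (p:ℤ)*r')^2 - b*m^2 := by ring
    rwa [e] at h2

theorem stmt_0 (p : ℕ) (hp : p.Prime) (hodd : Odd p) (α : ℕ) (hα : 2 ≤ α)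
    (b m : ℤ) (hm : (p : ℤ) ∣ m) :
    cSum b m (p ^ α) = 0 := by
  obtain ⟨β, rfl⟩ : ∃ β, α = β + 1 := ⟨α - 1, by omega⟩
  have hβ : 1 ≤ β := by omega
  have hp1 : 1 < p := hp.one_lt
  have hd : p ^ (β + 1) = p * p ^ β := by rw [pow_succ]; ring
  rw [cSum, hd, sum_range_mul_eq']
  rw [Finset.sum_comm]
  apply Finset.sum_eq_zero
  intro r hr
  have hcast : ∀ j : ℕ, ((p ^ β * j + r : ℕ) : ℤ) = (p:ℤ)^β * (j:ℤ) + (r:ℤ) := by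
    intro j; push_cast; ring
  have hcond : ∀ j : ℕ,
      (((p * p ^ β : ℕ)) : ℤ) ∣ (((p ^ β * j + r : ℕ)) : ℤ) ^ 2 - b * m ^ 2 ↔
      (((p * p ^ β : ℕ)) : ℤ) ∣ ((r : ℤ)) ^ 2 - b * m ^ 2 := by
    intro j
    have hdc : ((p * p ^ β : ℕ) : ℤ) = (p:ℤ)^(β+1) := by push_cast [pow_succ]; ring
    rw [hdc, hcast j]
    exact cond_iff p hp β hβ b m hm (r:ℤ) (j:ℤ)
  by_cases hc : (((p * p ^ β : ℕ)) : ℤ) ∣ ((r : ℤ)) ^ 2 - b * m ^ 2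
  · have hsplit : ∀ j : ℕ,
        Complex.exp (2 * Real.pi * Complex.I * ((p ^ β * j + r : ℕ) : ℂ) / ((p * p ^ β : ℕ) : ℂ))
          = Complex.exp (2 * Real.pi * Complex.I * (r : ℂ) / ((p * p ^ β : ℕ) : ℂ)) *
            Complex.exp (2 * Real.pi * Complex.I * (j : ℂ) / (p : ℂ)) := by
      intro j
      rw [← Complex.exp_add]
      congr 1
      have hp0 : (p : ℂ) ≠ 0 := Nat.cast_ne_zero.mpr (by omega)
      have hq0 : ((p : ℂ)) ^ β ≠ 0 := pow_ne_zero _ hp0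
      push_cast
      field_simp
      ring
    calc ∑ j ∈ Finset.range p,
          (if (((p * p ^ β : ℕ)) : ℤ) ∣ (((p ^ β * j + r : ℕ)) : ℤ) ^ 2 - b * m ^ 2 then
            Complex.exp (2 * Real.pi * Complex.I * ((p ^ β * j + r : ℕ) : ℂ) / ((p * p ^ β : ℕ) : ℂ)) else 0)
        = ∑ j ∈ Finset.range p,
            Complex.exp (2 * Real.pi * Complex.I * (r : ℂ) / ((p * p ^ β : ℕ) : ℂ)) *
              Complex.exp (2 * Real.pi * Complex.I * (j : ℂ) / (p : ℂ)) := by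
          refine Finset.sum_congr rfl fun j _ => ?_
          rw [if_pos ((hcond j).mpr hc), hsplit j]
      _ = 0 := by rw [← Finset.mul_sum, geom_zero' p hp1, mul_zero]
  · refine Finset.sum_eq_zero fun j _ => ?_
    rw [if_neg (fun h => hc ((hcond j).mp h))]
end

section
/- Let p be an odd prime, α ≥ 2 an integer, b an integer, and m an integer coprime to p. If c_b(m, p^α) ≠ 0, then c_b(1, p^α) ≠ 0. -/
open Complex Finset

private lemma reindex' (c p : ℕ) (hc : 0 < c) (f : ℕ → ℂ) :
    ∑ y ∈ range (c*p), f y = ∑ r ∈ range c, ∑ k ∈ range p, f (r + c*k) := by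
  rw [← Finset.sum_product']
  apply Finset.sum_nbij' (fun y => (y % c, y / c)) (fun rk => rk.1 + c * rk.2)
  · intro y hy
    simp only [mem_range] at hy
    simp only [mem_product, mem_range]
    exact ⟨Nat.mod_lt _ hc, Nat.div_lt_of_lt_mul (by omega)⟩
  · intro rk hrk
    simp only [mem_product, mem_range] at hrk
    simp only [mem_range]
    have h1 : rk.2 + 1 ≤ p := hrk.2
    calc rk.1 + c * rk.2 < c + c * rk.2 := by omega
    _ = c * (rk.2 + 1) := by ring
    _ ≤ c * p := Nat.mul_le_mul_left _ h1
  · intro y hy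
    exact (Nat.mod_add_div y c)
  · intro rk hrk
    simp only [mem_product, mem_range] at hrk
    ext
    · simp [Nat.add_mul_mod_self_left, Nat.mod_eq_of_lt hrk.1]
    · simp [Nat.add_mul_div_left _ _ hc, Nat.div_eq_of_lt hrk.1]
  · intro y hy
    rw [Nat.mod_add_div y c]

private lemma roots_sum' (p : ℕ) (hp : 1 < p) :
    ∑ k ∈ range p, Complex.exp (2*Real.pi*Complex.I*k/p) = 0 := by
  have h0 : (p:ℕ) ≠ 0 := by omega
  have hpr := Complex.isPrimitiveRoot_exp p h0
  have := hpr.geom_sum_eq_zero hp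
  rw [← this]
  exact Finset.sum_congr rfl fun k _ => by rw [← Complex.exp_nat_mul]; ring_nf

private lemma case_pb' (p : ℕ) (hp : p.Prime) (α : ℕ) (hα : 2 ≤ α)
    (b m : ℤ) (hb : (p:ℤ) ∣ b) : cSum b m (p^α) = 0 := by
  set c : ℕ := p ^ (α - 1) with hc
  have hd : p ^ α = c * p := by
    rw [hc, ← pow_succ]; congr 1; omega
  have hc0 : 0 < c := pow_pos hp.pos _
  have hpc : (p:ℤ) ∣ (c:ℤ) := by
    have : p ∣ c := dvd_pow_self p (by omega)
    exact_mod_cast this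
  have hpd : (p:ℤ) ∣ ((c*p:ℕ):ℤ) := by push_cast; exact Dvd.intro_left _ rfl
  have hpbm : (p:ℤ) ∣ b * m^2 := hb.mul_right _
  have key : ∀ r k : ℕ, (p:ℤ) ∣ (r:ℤ) →
      ((c*p : ℕ) : ℤ) ∣ (((r + c*k : ℕ)) : ℤ) ^ 2 - (r:ℤ)^2 := by
    intro r k hprr
    push_cast
    have he : ((r:ℤ) + c*k)^2 - (r:ℤ)^2 = c * (2*r*k + c*k^2) := by ring
    rw [he]
    apply mul_dvd_mul_left
    exact dvd_add ((hprr.mul_left 2).mul_right _) (hpc.mul_right _)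
  rw [cSum, hd, reindex' c p hc0]
  apply Finset.sum_eq_zero
  intro r hr
  by_cases h0 : ((c*p : ℕ) : ℤ) ∣ ((r : ℤ) ^ 2 - b * m ^ 2)
  · -- condition holds for all k; p ∣ r
    have hpr2 : (p:ℤ) ∣ (r:ℤ)^2 := by
      have h1 : (p:ℤ) ∣ (r:ℤ)^2 - b*m^2 := hpd.trans h0
      have : (r:ℤ)^2 = ((r:ℤ)^2 - b*m^2) + b*m^2 := by ring
      rw [this]; exact dvd_add h1 hpbm
    have hprr : (p:ℤ) ∣ (r:ℤ) := (Nat.prime_iff_prime_int.mp hp).dvd_of_dvd_pow hpr2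
    have step : ∀ k ∈ range p,
        (if ((c*p:ℕ):ℤ) ∣ (((r + c*k : ℕ)) : ℤ)^2 - b*m^2 then
          Complex.exp (2*Real.pi*Complex.I*((r + c*k : ℕ):ℂ)/((c*p:ℕ):ℂ)) else 0)
        = Complex.exp (2*Real.pi*Complex.I*(r:ℂ)/((c*p:ℕ):ℂ)) *
            Complex.exp (2*Real.pi*Complex.I*(k:ℂ)/(p:ℂ)) := by
      intro k hk
      rw [if_pos]
      · rw [← Complex.exp_add]
        congr 1
        have hcne : (c:ℂ) ≠ 0 := Nat.cast_ne_zero.mpr (by omega)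
        have hpne : (p:ℂ) ≠ 0 := Nat.cast_ne_zero.mpr hp.pos.ne'
        push_cast
        field_simp
      · have : ((r:ℤ))^2 - b*m^2 + ((((r + c*k : ℕ)) : ℤ)^2 - (r:ℤ)^2)
            = (((r + c*k : ℕ)) : ℤ)^2 - b*m^2 := by ring
        rw [← this]
        exact dvd_add h0 (key r k hprr)
    rw [Finset.sum_congr rfl step, ← Finset.mul_sum, roots_sum' p hp.one_lt, mul_zero]
  · -- condition fails for all k
    apply Finset.sum_eq_zero
    intro k hk
    rw [if_neg]
    intro hcond
    apply h0
    have hpy2 : (p:ℤ) ∣ ((r + c*k : ℕ):ℤ)^2 := by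
      have h1 : (p:ℤ) ∣ ((r + c*k : ℕ):ℤ)^2 - b*m^2 := hpd.trans hcond
      have : ((r + c*k : ℕ):ℤ)^2 = (((r + c*k : ℕ):ℤ)^2 - b*m^2) + b*m^2 := by ring
      rw [this]; exact dvd_add h1 hpbm
    have hpy : (p:ℤ) ∣ ((r + c*k : ℕ):ℤ) := (Nat.prime_iff_prime_int.mp hp).dvd_of_dvd_pow hpy2
    have hprr : (p:ℤ) ∣ (r:ℤ) := by
      have h2 : (p:ℤ) ∣ (c:ℤ)*k := hpc.mul_right _
      have : (r:ℤ) = ((r + c*k : ℕ):ℤ) - (c:ℤ)*k := by push_cast; ring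
      rw [this]; exact dvd_sub hpy h2
    have : (r:ℤ)^2 - b*m^2 = (((r + c*k : ℕ)):ℤ)^2 - b*m^2 - ((((r + c*k : ℕ)):ℤ)^2 - (r:ℤ)^2) := by ring
    rw [this]
    exact dvd_sub hcond (key r k hprr)

private lemma sum_pair' (d : ℕ) (hdodd : Odd d) (hd1 : 1 < d) (b : ℤ) (x0 : ℕ)
    (hx0d : x0 < d) (hx00 : x0 ≠ 0)
    (hdvd : (d:ℤ) ∣ (x0:ℤ)^2 - b)
    (huniq : ∀ y : ℕ, y < d → (d:ℤ) ∣ (y:ℤ)^2 - b → y = x0 ∨ y = d - x0) :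
    cSum b 1 d ≠ 0 := by
  have hne : x0 ≠ d - x0 := by
    intro hEq
    have : d = 2 * x0 := by omega
    rw [this] at hdodd
    exact (Nat.not_odd_iff_even.mpr ⟨x0, by ring⟩) hdodd
  have hsub : (d:ℤ) ∣ ((d - x0 : ℕ):ℤ)^2 - b := by
    have hc : ((d - x0 : ℕ):ℤ) = (d:ℤ) - (x0:ℤ) := by
      have := hx0d.le; push_cast [this]; ring
    rw [hc]
    have : ((d:ℤ) - x0)^2 - b = ((x0:ℤ)^2 - b) + (d:ℤ) * (d - 2*x0) := by ring
    rw [this]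
    exact dvd_add hdvd (Dvd.intro _ rfl)
  have hfilter : Finset.filter (fun y : ℕ => (d:ℤ) ∣ (((y:ℕ):ℤ)^2 - b*1^2)) (Finset.range d)
      = {x0, d - x0} := by
    ext y
    simp only [Finset.mem_filter, Finset.mem_range, Finset.mem_insert, Finset.mem_singleton]
    constructor
    · rintro ⟨hy, hdy⟩
      exact huniq y hy (by simpa using hdy)
    · rintro (rfl | rfl)
      · exact ⟨hx0d, by simpa using hdvd⟩
      · exact ⟨by omega, by simpa using hsub⟩
  rw [cSum, ← Finset.sum_filter, hfilter, Finset.sum_insert (by simpa using hne),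
    Finset.sum_singleton]
  have hd0 : (d:ℂ) ≠ 0 := Nat.cast_ne_zero.mpr (by omega)
  have hcsub : ((d - x0 : ℕ):ℂ) = (d:ℂ) - (x0:ℂ) := by
    have := hx0d.le; push_cast [this]; ring
  have he2 : Complex.exp (2*Real.pi*Complex.I*((d - x0 : ℕ):ℂ)/(d:ℂ))
      = Complex.exp (-(2*Real.pi*Complex.I*(x0:ℂ)/(d:ℂ))) := by
    rw [hcsub]
    have : 2*Real.pi*Complex.I*((d:ℂ) - (x0:ℂ))/(d:ℂ)
        = 2*Real.pi*Complex.I + -(2*Real.pi*Complex.I*(x0:ℂ)/(d:ℂ)) := by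
      field_simp; ring
    rw [this, Complex.exp_add, Complex.exp_two_pi_mul_I, one_mul]
  rw [he2]
  set θ : ℝ := 2*Real.pi*(x0:ℝ)/(d:ℝ) with hθ
  have harg : 2*Real.pi*Complex.I*(x0:ℂ)/(d:ℂ) = (θ:ℂ) * Complex.I := by
    rw [hθ]; push_cast; field_simp
  rw [harg, ← neg_mul, Complex.exp_mul_I, Complex.exp_mul_I]
  rw [Complex.cos_neg, Complex.sin_neg]
  have : Complex.cos θ + Complex.sin θ * Complex.I
      + (Complex.cos θ + -Complex.sin θ * Complex.I) = 2 * Complex.cos θ := by ring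
  rw [this]
  simp only [mul_ne_zero_iff]
  constructor
  · norm_num
  · rw [← Complex.ofReal_cos]
    simp only [ne_eq, Complex.ofReal_eq_zero]
    intro hcos
    rw [Real.cos_eq_zero_iff] at hcos
    obtain ⟨n, hn⟩ := hcos
    rw [hθ] at hn
    have hπ : Real.pi ≠ 0 := Real.pi_ne_zero
    have hdR : (d:ℝ) ≠ 0 := Nat.cast_ne_zero.mpr (by omega)
    field_simp at hn
    have h4 : Real.pi * ((4 * x0 : ℤ) : ℝ) = Real.pi * (((2*n+1 : ℤ) : ℝ) * d) := by
      push_cast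
      linear_combination Real.pi * hn
    have hR : ((4 * x0 : ℤ) : ℝ) = ((2*n+1 : ℤ) : ℝ) * ((d:ℤ):ℝ) := by
      have := mul_left_cancel₀ hπ h4
      push_cast at this ⊢
      linarith [this]
    have hZ : (4 * x0 : ℤ) = (2*n+1) * (d:ℤ) := by exact_mod_cast hR
    have hoddZ : Odd ((2*n+1) * (d:ℤ)) := by
      have h1 : Odd (2*n+1 : ℤ) := ⟨n, by ring⟩
      have h2 : Odd (d:ℤ) := by exact_mod_cast hdodd
      exact h1.mul h2
    rw [← hZ] at hoddZ
    obtain ⟨k, hk⟩ := hoddZ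
    omega

theorem stmt_1 (p : ℕ) (hp : p.Prime) (hodd : Odd p) (α : ℕ) (hα : 2 ≤ α)
    (b m : ℤ) (hm : ¬ (p : ℤ) ∣ m) (h : cSum b m (p ^ α) ≠ 0) :
    cSum b 1 (p ^ α) ≠ 0 := by
  by_cases hpb : (p:ℤ) ∣ b
  · exact absurd (case_pb' p hp α hα b m hpb) h
  · -- existence of a solution y to y² ≡ b m² (mod p^α)
    have hd1 : 1 < p ^ α := Nat.one_lt_pow (by omega) hp.one_lt
    haveI : NeZero (p ^ α) := ⟨by omega⟩
    have hex : ∃ y : ℕ, ((p^α : ℕ):ℤ) ∣ (y:ℤ)^2 - b*m^2 := by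
      by_contra hno
      push_neg at hno
      apply h
      apply Finset.sum_eq_zero
      intro y hy
      rw [if_neg (hno y)]
    obtain ⟨y, hy⟩ := hex
    -- move to ZMod (p^α)
    have hY : ((y : ℕ) : ZMod (p^α))^2 = (b : ZMod (p^α)) * ((m : ZMod (p^α)))^2 := by
      have := (ZMod.intCast_zmod_eq_zero_iff_dvd ((y:ℤ)^2 - b*m^2) (p^α)).mpr hy
      push_cast at this
      linear_combination this
    -- m is a unit mod p^α
    have hMunit : IsUnit ((m : ℤ) : ZMod (p^α)) := by
      have hco : Nat.Coprime m.natAbs (p^α) := by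
        apply Nat.Coprime.pow_right
        rw [Nat.coprime_comm]
        apply (Nat.Prime.coprime_iff_not_dvd hp).mpr
        intro hdvd
        exact hm (Int.natCast_dvd.mpr hdvd)
      have hunit : IsUnit ((m.natAbs : ℕ) : ZMod (p^α)) :=
        (ZMod.isUnit_iff_coprime _ _).mpr hco
      rcases Int.natAbs_eq m with heq | heq
      · rw [heq, Int.cast_natCast]; exact hunit
      · rw [heq, Int.cast_neg, Int.cast_natCast]; exact hunit.neg
    obtain ⟨v, hv⟩ := hMunit
    set x : ZMod (p^α) := ((y : ℕ) : ZMod (p^α)) * ↑v⁻¹ with hxdef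
    have hx : x^2 = (b : ZMod (p^α)) := by
      rw [hxdef, mul_pow, hY, ← hv]
      have : (↑v * ↑v⁻¹ : ZMod (p^α)) = 1 := v.mul_inv
      calc (b : ZMod (p^α)) * (↑v:ZMod (p^α))^2 * (↑v⁻¹:ZMod (p^α))^2
          = (b : ZMod (p^α)) * ((↑v * ↑v⁻¹ : ZMod (p^α)))^2 := by ring
      _ = (b : ZMod (p^α)) := by rw [this]; ring
    set x0 : ℕ := x.val with hx0def
    have hx0d : x0 < p ^ α := ZMod.val_lt x
    have hcast : ((x0 : ℕ) : ZMod (p^α)) = x := ZMod.natCast_rightInverse x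
    have hdvd : ((p^α : ℕ):ℤ) ∣ (x0:ℤ)^2 - b := by
      rw [← ZMod.intCast_zmod_eq_zero_iff_dvd]
      push_cast
      rw [hcast, hx]
      ring
    have hpZ : Prime (p:ℤ) := Nat.prime_iff_prime_int.mp hp
    have hpd : (p:ℤ) ∣ ((p^α : ℕ):ℤ) := by
      have : p ∣ p^α := dvd_pow_self p (by omega)
      exact_mod_cast this
    have hpx0 : ¬ (p:ℤ) ∣ (x0:ℤ) := by
      intro hpx
      apply hpb
      have h1 : (p:ℤ) ∣ (x0:ℤ)^2 - b := hpd.trans hdvd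
      have : b = (x0:ℤ)^2 - ((x0:ℤ)^2 - b) := by ring
      rw [this]
      exact dvd_sub (dvd_pow hpx two_ne_zero) h1
    have hx00 : x0 ≠ 0 := by
      intro h0
      exact hpx0 (by rw [h0]; exact dvd_zero _)
    -- uniqueness of square roots
    have huniq : ∀ z : ℕ, z < p^α → ((p^α : ℕ):ℤ) ∣ (z:ℤ)^2 - b → z = x0 ∨ z = p^α - x0 := by
      intro z hz hdz
      have hfac : ((p^α : ℕ):ℤ) ∣ ((z:ℤ) - x0) * ((z:ℤ) + x0) := by
        have : ((z:ℤ) - x0) * ((z:ℤ) + x0) = ((z:ℤ)^2 - b) - ((x0:ℤ)^2 - b) := by ring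
        rw [this]
        exact dvd_sub hdz hdvd
      have hcastd : ((p^α : ℕ):ℤ) = (p:ℤ)^α := by push_cast; ring
      have hnot : ¬ ((p:ℤ) ∣ (z:ℤ) - x0 ∧ (p:ℤ) ∣ (z:ℤ) + x0) := by
        rintro ⟨h1, h2⟩
        apply hpx0
        have h3 : (p:ℤ) ∣ 2 * x0 := by
          have : (2:ℤ) * x0 = ((z:ℤ) + x0) - ((z:ℤ) - x0) := by ring
          rw [this]; exact dvd_sub h2 h1
        rcases hpZ.dvd_mul.mp h3 with h4 | h4
        · exfalso
          have : (p:ℤ) ≤ 2 := Int.le_of_dvd (by norm_num) h4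
          have hp3 : 3 ≤ p := by
            rcases hodd with ⟨j, hj⟩
            have := hp.two_le
            omega
          have : (3:ℤ) ≤ p := by exact_mod_cast hp3
          omega
        · exact h4
      by_cases hc1 : (p:ℤ) ∣ (z:ℤ) + x0
      ·
        have hc2 : ¬ (p:ℤ) ∣ (z:ℤ) - x0 := fun hh => hnot ⟨hh, hc1⟩
        have hcop : IsCoprime ((p:ℤ)^α) ((z:ℤ) - x0) :=
          (hpZ.coprime_iff_not_dvd.mpr hc2).pow_left
        have hdvd2 : ((p:ℤ)^α) ∣ (z:ℤ) + x0 := by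
          apply hcop.dvd_of_dvd_mul_left
          rw [← hcastd]; exact hfac
        right
        -- z + x0 ≡ 0 mod p^α, 0 < z + x0 < 2 p^α
        have hdvdN : (p^α : ℕ) ∣ z + x0 := by
          have : ((p^α : ℕ):ℤ) ∣ ((z + x0 : ℕ):ℤ) := by
            rw [hcastd]; push_cast; exact_mod_cast hdvd2
          exact_mod_cast this
        obtain ⟨t, ht⟩ := hdvdN
        have ht2 : t < 2 := by
          by_contra hge
          push_neg at hge
          have : p^α * 2 ≤ p^α * t := Nat.mul_le_mul_left _ hge
          omega
        interval_cases t
        · omega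
        · omega
      · have hcop : IsCoprime ((p:ℤ)^α) ((z:ℤ) + x0) :=
          (hpZ.coprime_iff_not_dvd.mpr hc1).pow_left
        have hdvd2 : ((p:ℤ)^α) ∣ (z:ℤ) - x0 := by
          apply hcop.dvd_of_dvd_mul_right
          rw [← hcastd]; exact hfac
        left
        have habs : |(z:ℤ) - x0| < (p:ℤ)^α := by
          rw [abs_sub_lt_iff]
          constructor
          · have : (z:ℤ) < (p:ℤ)^α := by exact_mod_cast (hcastd ▸ Nat.cast_lt.mpr hz : ((z:ℕ):ℤ) < (p:ℤ)^α)
            have h0 : (0:ℤ) ≤ (x0:ℤ) := Int.natCast_nonneg _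
            omega
          · have : (x0:ℤ) < (p:ℤ)^α := by exact_mod_cast (hcastd ▸ Nat.cast_lt.mpr hx0d : ((x0:ℕ):ℤ) < (p:ℤ)^α)
            have h0 : (0:ℤ) ≤ (z:ℤ) := Int.natCast_nonneg _
            omega
        have := Int.eq_zero_of_abs_lt_dvd hdvd2 habs
        omega
    exact sum_pair' (p^α) hodd.pow hd1 b x0 hx0d hx00 hdvd huniq
end

section
/- Let T ≥ 2, y > 0 with y > T, σ ≤ 0, and g(τ) = 2τ log(ey/τ). Then ∫_1^T y^{2σ} τ^{−2σ} e^{ig(τ)} dτ ≪ T^{−2σ} y^{2σ} (1 + |log(y/T)|^{−1}), with an absolute implied constant. -/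
open Real Complex intervalIntegral Set MeasureTheory

theorem stmt_16 :
    ∃ K : ℝ, 0 < K ∧ ∀ T y σ : ℝ, 2 ≤ T → T < y → σ ≤ 0 →
      ‖∫ τ in (1 : ℝ)..T,
          ((y ^ (2 * σ) * τ ^ (-(2 * σ)) : ℝ) : ℂ) *
            Complex.exp (Complex.I * ((2 * τ * Real.log (Real.exp 1 * y / τ) : ℝ) : ℂ))‖
        ≤ K * T ^ (-(2 * σ)) * y ^ (2 * σ) * (1 + |Real.log (y / T)|⁻¹) := by
  refine ⟨1, one_pos, ?_⟩
  intro T y σ hT hTy hσ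
  have hT0 : (0:ℝ) < T := lt_of_lt_of_le two_pos hT
  have h1T : (1:ℝ) ≤ T := by linarith
  have hy0 : (0:ℝ) < y := lt_trans hT0 hTy
  set a : ℝ := -(2*σ) with ha
  have ha0 : 0 ≤ a := by simp only [ha]; linarith
  set c : ℝ := y ^ (2*σ) with hc
  have hc0 : 0 < c := Real.rpow_pos_of_pos hy0 _
  clear_value a c
  set D : ℝ → ℝ := fun t => 2*(Real.log y - Real.log t) with hD
  set φ : ℝ → ℝ := fun t => c * t ^ a / D t with hφ
  set φ' : ℝ → ℝ := fun t => c * ((a * t ^ (a-1)) * D t + 2 * t ^ (a-1)) / (D t)^2 with hφ'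
  set g : ℝ → ℝ := fun t => 2*t*Real.log (Real.exp 1 * y / t) with hg
  set h : ℝ → ℂ := fun t => Complex.exp (Complex.I * (g t : ℂ)) with hh
  clear_value D φ φ' g h
  have hIcc : uIcc (1:ℝ) T = Icc 1 T := uIcc_of_le h1T
  have ht0 : ∀ t ∈ Icc (1:ℝ) T, 0 < t := fun t ht => lt_of_lt_of_le one_pos ht.1
  have hDpos : ∀ t ∈ Icc (1:ℝ) T, 0 < D t := by
    intro t ht
    have : Real.log t < Real.log y := Real.log_lt_log (ht0 t ht) (lt_of_le_of_lt ht.2 hTy)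
    simp only [hD]; linarith
  have hpow : ∀ t : ℝ, 0 < t → t ^ (a-1) = t ^ a / t := by
    intro t ht; rw [Real.rpow_sub ht, Real.rpow_one]
  have hφnn : ∀ t ∈ Icc (1:ℝ) T, 0 ≤ φ t := by
    intro t ht
    have h1 := Real.rpow_pos_of_pos (ht0 t ht) a
    have h2 := hDpos t ht
    rw [hφ]; positivity
  have hφ'nn : ∀ t ∈ Icc (1:ℝ) T, 0 ≤ φ' t := by
    intro t ht
    have h1 := Real.rpow_pos_of_pos (ht0 t ht) (a-1)
    have h2 := hDpos t ht
    have h3 : 0 ≤ (a * t ^ (a-1)) * D t + 2 * t ^ (a-1) := by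
      have := mul_nonneg (mul_nonneg ha0 h1.le) h2.le
      linarith
    rw [hφ']; positivity
  -- derivative of D
  have hDd : ∀ t ∈ Icc (1:ℝ) T, HasDerivAt D (-(2/t)) t := by
    intro t ht
    have := ((Real.hasDerivAt_log (ne_of_gt (ht0 t ht))).const_sub (Real.log y)).const_mul (2:ℝ)
    rw [hD]
    exact this.congr_deriv (by ring)
  -- derivative of φ
  have hφd : ∀ t ∈ Icc (1:ℝ) T, HasDerivAt φ (φ' t) t := by
    intro t ht
    have htne : t ≠ 0 := ne_of_gt (ht0 t ht)
    have hDne : D t ≠ 0 := ne_of_gt (hDpos t ht)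
    have hrp : HasDerivAt (fun x : ℝ => c * x ^ a) (c * (a * t ^ (a-1))) t :=
      (Real.hasDerivAt_rpow_const (Or.inl htne)).const_mul c
    have hdiv := hrp.div (hDd t ht) hDne
    simp only [hφ, hφ']
    have hnum : c * ((a * t ^ (a-1)) * D t + 2 * t ^ (a-1))
        = c * (a * t ^ (a-1)) * D t - c * t ^ a * -(2/t) := by
      rw [hpow t (ht0 t ht)]
      field_simp
      try ring
    rw [hnum]
    exact hdiv
  -- derivative of g
  have hgd : ∀ t ∈ Icc (1:ℝ) T, HasDerivAt g (D t) t := by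
    intro t ht
    have htne : t ≠ 0 := ne_of_gt (ht0 t ht)
    have hlog : HasDerivAt (fun x : ℝ => 1 + Real.log y - Real.log x) (-(t⁻¹)) t :=
      (Real.hasDerivAt_log htne).const_sub (1 + Real.log y)
    have hG : HasDerivAt (fun x : ℝ => (2*x) * (1 + Real.log y - Real.log x))
        ((2*1) * (1 + Real.log y - Real.log t) + (2*t) * (-(t⁻¹))) t :=
      ((hasDerivAt_id t).const_mul 2).mul hlog
    have hev : g =ᶠ[nhds t] (fun x : ℝ => (2*x) * (1 + Real.log y - Real.log x)) := by
      filter_upwards [eventually_gt_nhds (ht0 t ht)] with x hx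
      have hx0 : x ≠ 0 := ne_of_gt hx
      rw [hg]
      simp only
      rw [Real.log_div (by positivity) hx0, Real.log_mul (Real.exp_ne_zero 1) (ne_of_gt hy0),
        Real.log_exp]
      try ring
    have hres := hG.congr_of_eventuallyEq hev
    have htt : t * t⁻¹ = 1 := mul_inv_cancel₀ htne
    refine hres.congr_deriv ?_
    simp only [hD]
    linear_combination (-2) * htt
  -- derivative of h
  have hhd : ∀ t ∈ Icc (1:ℝ) T, HasDerivAt h (h t * (Complex.I * (D t : ℂ))) t := by
    intro t ht
    have := (((hgd t ht).ofReal_comp).const_mul Complex.I).cexp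
    rw [hh]
    exact this
  -- complex functions for integration by parts
  set u : ℝ → ℂ := fun t => ((φ t : ℝ) : ℂ) with hu
  set u' : ℝ → ℂ := fun t => ((φ' t : ℝ) : ℂ) with hu'
  set v' : ℝ → ℂ := fun t => h t * (Complex.I * (D t : ℂ)) with hv'
  -- continuity
  have hlogcont : ContinuousOn Real.log (Icc (1:ℝ) T) :=
    Real.continuousOn_log.mono (fun x hx => ne_of_gt (ht0 x hx))
  have hDcont : ContinuousOn D (Icc (1:ℝ) T) := by
    rw [hD]; exact continuousOn_const.mul (continuousOn_const.sub hlogcont)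
  have hrpcont : ∀ p : ℝ, ContinuousOn (fun t : ℝ => t ^ p) (Icc (1:ℝ) T) := by
    intro p
    exact continuousOn_id.rpow_const (fun x hx => Or.inl (ne_of_gt (ht0 x hx)))
  have hφ'cont : ContinuousOn φ' (Icc (1:ℝ) T) := by
    rw [hφ']
    apply ContinuousOn.div
    · exact continuousOn_const.mul (((continuousOn_const.mul (hrpcont (a-1))).mul hDcont).add
        (continuousOn_const.mul (hrpcont (a-1))))
    · exact hDcont.pow 2
    · intro x hx; exact pow_ne_zero 2 (ne_of_gt (hDpos x hx))
  have hφcont : ContinuousOn φ (Icc (1:ℝ) T) := by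
    rw [hφ]
    exact ContinuousOn.div (continuousOn_const.mul (hrpcont a)) hDcont
      (fun x hx => ne_of_gt (hDpos x hx))
  have hgcont : ContinuousOn g (Icc (1:ℝ) T) := by
    rw [hg]
    apply ContinuousOn.mul (continuousOn_const.mul continuousOn_id)
    apply Real.continuousOn_log.comp (continuousOn_const.div continuousOn_id
      (fun x hx => ne_of_gt (ht0 x hx)))
    intro x hx
    have hx0 := ht0 x hx
    simp only [Set.mem_compl_iff, Set.mem_singleton_iff]
    exact ne_of_gt (div_pos (mul_pos (Real.exp_pos 1) hy0) hx0)
  have hhcont : ContinuousOn h (Icc (1:ℝ) T) := by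
    rw [hh]
    exact Complex.continuous_exp.comp_continuousOn
      (continuousOn_const.mul (Complex.continuous_ofReal.comp_continuousOn hgcont))
  -- integrability
  have hInt_u' : IntervalIntegrable u' volume 1 T := by
    apply ContinuousOn.intervalIntegrable
    rw [hIcc]
    exact Complex.continuous_ofReal.comp_continuousOn hφ'cont
  have hInt_v' : IntervalIntegrable v' volume 1 T := by
    apply ContinuousOn.intervalIntegrable
    rw [hIcc, hv']
    exact hhcont.mul (continuousOn_const.mul (Complex.continuous_ofReal.comp_continuousOn hDcont))
  have hInt_φ' : IntervalIntegrable φ' volume 1 T := by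
    apply ContinuousOn.intervalIntegrable
    rw [hIcc]; exact hφ'cont
  -- integration by parts
  have hud : ∀ x ∈ uIcc (1:ℝ) T, HasDerivAt u (u' x) x := by
    intro x hx; rw [hIcc] at hx
    exact (hφd x hx).ofReal_comp
  have hvd : ∀ x ∈ uIcc (1:ℝ) T, HasDerivAt h (v' x) x := by
    intro x hx; rw [hIcc] at hx; exact hhd x hx
  have hIBP := intervalIntegral.integral_mul_deriv_eq_deriv_mul hud hvd hInt_u' hInt_v'
  -- rewrite the original integrand
  have hEq : EqOn (fun τ : ℝ => ((c * τ ^ a : ℝ) : ℂ) *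
      Complex.exp (Complex.I * ((g τ : ℝ) : ℂ)))
      (fun τ => (-Complex.I) * (u τ * v' τ)) (uIcc 1 T) := by
    intro τ hτ
    rw [hIcc] at hτ
    have hDne : D τ ≠ 0 := ne_of_gt (hDpos τ hτ)
    have hreal : (c * τ ^ a : ℝ) = φ τ * D τ := by rw [hφ]; field_simp
    simp only [hu, hv', hh, hreal]
    push_cast
    linear_combination ((φ τ : ℂ) * Complex.exp (Complex.I * ((g τ : ℝ) : ℂ)) * (D τ : ℂ)) * Complex.I_mul_I
  have horig : (∫ τ in (1:ℝ)..T, ((c * τ ^ a : ℝ) : ℂ) *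
      Complex.exp (Complex.I * ((g τ : ℝ) : ℂ)))
      = -Complex.I * ∫ τ in (1:ℝ)..T, u τ * v' τ := by
    rw [intervalIntegral.integral_congr hEq, intervalIntegral.integral_const_mul]
  -- norms
  have hnh : ∀ t : ℝ, ‖h t‖ = 1 := by
    intro t
    rw [hh]
    simp [Complex.norm_exp]
  have hnu : ∀ t ∈ Icc (1:ℝ) T, ‖u t‖ = φ t := by
    intro t ht
    rw [hu]
    simp only [Complex.norm_real]
    exact abs_of_nonneg (hφnn t ht)
  have hmemT : T ∈ Icc (1:ℝ) T := ⟨h1T, le_refl T⟩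
  have hmem1 : (1:ℝ) ∈ Icc (1:ℝ) T := ⟨le_refl 1, h1T⟩
  -- bound the error integral
  have herr : ‖∫ τ in (1:ℝ)..T, u' τ * h τ‖ ≤ φ T - φ 1 := by
    have h1 : ‖∫ τ in (1:ℝ)..T, u' τ * h τ‖ ≤ ∫ τ in (1:ℝ)..T, ‖u' τ * h τ‖ :=
      intervalIntegral.norm_integral_le_integral_norm h1T
    have h2 : (∫ τ in (1:ℝ)..T, ‖u' τ * h τ‖) = ∫ τ in (1:ℝ)..T, φ' τ := by
      apply intervalIntegral.integral_congr
      intro τ hτ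
      rw [hIcc] at hτ
      simp only [norm_mul, hnh τ, mul_one, hu', Complex.norm_real]
      exact abs_of_nonneg (hφ'nn τ hτ)
    have h3 : (∫ τ in (1:ℝ)..T, φ' τ) = φ T - φ 1 := by
      apply intervalIntegral.integral_eq_sub_of_hasDerivAt
      · intro x hx; rw [hIcc] at hx; exact hφd x hx
      · exact hInt_φ'
    rw [h2, h3] at h1
    exact h1
  -- main bound
  have hmain : ‖∫ τ in (1:ℝ)..T, ((c * τ ^ a : ℝ) : ℂ) *
      Complex.exp (Complex.I * ((g τ : ℝ) : ℂ))‖ ≤ 2 * φ T := by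
    rw [horig, norm_mul]
    simp only [norm_neg, Complex.norm_I, one_mul]
    rw [hIBP]
    calc ‖u T * h T - u 1 * h 1 - ∫ τ in (1:ℝ)..T, u' τ * h τ‖
        ≤ ‖u T * h T - u 1 * h 1‖ + ‖∫ τ in (1:ℝ)..T, u' τ * h τ‖ := norm_sub_le _ _
      _ ≤ (‖u T * h T‖ + ‖u 1 * h 1‖) + ‖∫ τ in (1:ℝ)..T, u' τ * h τ‖ := by
          gcongr; exact norm_sub_le _ _
      _ ≤ (φ T + φ 1) + (φ T - φ 1) := by
          have hb : ‖u T * h T‖ + ‖u 1 * h 1‖ = φ T + φ 1 := by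
            rw [norm_mul, norm_mul, hnh, hnh, mul_one, mul_one, hnu T hmemT, hnu 1 hmem1]
          exact add_le_add (le_of_eq hb) herr
      _ = 2 * φ T := by ring
  -- conclude
  have hL : Real.log (y / T) = Real.log y - Real.log T := Real.log_div (ne_of_gt hy0) (ne_of_gt hT0)
  have hLpos : 0 < Real.log (y / T) := by
    rw [hL]
    have := Real.log_lt_log hT0 hTy
    linarith
  have hTa : 0 < T ^ a := Real.rpow_pos_of_pos hT0 a
  have hfin : 2 * φ T ≤ 1 * T ^ a * c * (1 + |Real.log (y / T)|⁻¹) := by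
    rw [abs_of_pos hLpos]
    simp only [hφ, hD]
    rw [← hL]
    set L := Real.log (y / T) with hLdef
    have hLne : L ≠ 0 := ne_of_gt hLpos
    have hP : 0 < c * T ^ a := mul_pos hc0 hTa
    have hinv : 0 < L⁻¹ := inv_pos.mpr hLpos
    have hEq2 : 2 * (c * T ^ a / (2 * L)) = c * T ^ a * L⁻¹ := by
      field_simp
    rw [hEq2]
    nlinarith
  simp only [hg] at hmain
  exact le_trans hmain hfin
end
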